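/- Uniform convergence theorem for the Kurzweil–Stieltjes integral: let g : [a,b] → ℝ have bounded variation, and let f_n : [a,b] → ℝ be such that (K)∫_a^b f_n dg exists for every n and f_n → f uniformly on [a,b]. Then (K)∫_a^b f dg exists and lim_{n→∞} (K)∫_a^b f_n dg = (K)∫_a^b f dg. -/

import Mathlib

open Set Filter

/-- A tagged partition of `[a,b]`: points `a = pts 0 < pts 1 < … < pts n = b`
with tags `tag j ∈ [pts j, pts (j+1)]`. -/
structure TaggedPartition (a b : ℝ) where
  n : ℕ
  pts : ℕ → ℝ
  tag : ℕ → ℝ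
  n_pos : 0 < n
  pts_zero : pts 0 = a
  pts_last : pts n = b
  pts_mono : ∀ j < n, pts j < pts (j + 1)
  tag_mem : ∀ j < n, tag j ∈ Set.Icc (pts j) (pts (j + 1))

/-- Riemann–Stieltjes sum `S(f, dg, P)`. -/
def RS (f g : ℝ → ℝ) {a b : ℝ} (P : TaggedPartition a b) : ℝ :=
  ∑ j ∈ Finset.range P.n, f (P.tag j) * (g (P.pts (j + 1)) - g (P.pts j))

/-- `P` is `δ`-fine. -/
def IsFine (δ : ℝ → ℝ) {a b : ℝ} (P : TaggedPartition a b) : Prop :=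
  ∀ j < P.n, Set.Icc (P.pts j) (P.pts (j + 1)) ⊆
    Set.Icc (P.tag j - δ (P.tag j)) (P.tag j + δ (P.tag j))

/-- The Kurzweil–Stieltjes integral `(K)∫_a^b f dg` exists and equals `I`. -/
def HasKS (f g : ℝ → ℝ) (a b I : ℝ) : Prop :=
  ∀ ε > 0, ∃ δ : ℝ → ℝ, (∀ t ∈ Set.Icc a b, 0 < δ t ∧ δ t < 1) ∧
    ∀ P : TaggedPartition a b, IsFine δ P → |RS f g P - I| < ε

/-- The division of `P` contains all points of the finite set `D`. -/
def Refines {a b : ℝ} (P : TaggedPartition a b) (D : Finset ℝ) : Prop :=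
  ∀ x ∈ D, ∃ j ≤ P.n, P.pts j = x

/-- All tags of `P` lie strictly inside the corresponding subintervals. -/
def InteriorTags {a b : ℝ} (P : TaggedPartition a b) : Prop :=
  ∀ j < P.n, P.pts j < P.tag j ∧ P.tag j < P.pts (j + 1)

/-- The Dushnik integral `(D)∫_a^b f dg` exists and equals `I`. -/
def HasDushnik (f g : ℝ → ℝ) (a b I : ℝ) : Prop :=
  ∀ ε > 0, ∃ D : Finset ℝ, ↑D ⊆ Set.Icc a b ∧
    ∀ P : TaggedPartition a b, Refines P D → InteriorTags P → |RS f g P - I| < ε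

/-- `f` is regulated on `[a,b]`: it has finite one-sided limits (within `[a,b]`)
at every point where they make sense. -/
def Regulated (f : ℝ → ℝ) (a b : ℝ) : Prop :=
  (∀ t ∈ Set.Ioc a b, ∃ L : ℝ, Filter.Tendsto f (nhdsWithin t (Set.Ico a t)) (nhds L)) ∧
  (∀ t ∈ Set.Ico a b, ∃ L : ℝ, Filter.Tendsto f (nhdsWithin t (Set.Ioc t b)) (nhds L))

/-- The Young sum `S_Y(f, dg, P)`, where `gl t = g(t-)` and `gr t = g(t+)`
are the one-sided limit functions of `g`. -/
def YS (f gl gr g : ℝ → ℝ) {a b : ℝ} (P : TaggedPartition a b) : ℝ :=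
  ∑ j ∈ Finset.range P.n,
    (f (P.pts j) * (gr (P.pts j) - g (P.pts j))
      + f (P.tag j) * (gl (P.pts (j + 1)) - gr (P.pts j))
      + f (P.pts (j + 1)) * (g (P.pts (j + 1)) - gl (P.pts (j + 1))))

/-- The Young integral `(Y)∫_a^b f dg` exists and equals `I` (here `gl`, `gr`
are the one-sided limit functions of `g`). -/
def HasYoung (f gl gr g : ℝ → ℝ) (a b I : ℝ) : Prop :=
  ∀ ε > 0, ∃ D : Finset ℝ, ↑D ⊆ Set.Icc a b ∧
    ∀ P : TaggedPartition a b, Refines P D → InteriorTags P → |YS f gl gr g P - I| < ε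

/-- `f` is a finite step function on `[a,b]`: constant on the open subintervals
of some division `a = σ 0 < … < σ m = b`. -/
def IsStepFunction (f : ℝ → ℝ) (a b : ℝ) : Prop :=
  ∃ (m : ℕ) (σ : ℕ → ℝ), 0 < m ∧ σ 0 = a ∧ σ m = b ∧ (∀ k < m, σ k < σ (k + 1)) ∧
    ∀ k < m, ∀ x ∈ Set.Ioo (σ k) (σ (k + 1)), ∀ y ∈ Set.Ioo (σ k) (σ (k + 1)), f x = f y

/-- The (real-valued) total variation of `g` on `[a,b]`. -/
noncomputable def var (g : ℝ → ℝ) (a b : ℝ) : ℝ :=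
  (eVariationOn g (Set.Icc a b)).toReal

namespace Stmt13Aux

lemma pts_le {a b : ℝ} (P : TaggedPartition a b) {j k : ℕ} (hjk : j ≤ k) (hk : k ≤ P.n) :
    P.pts j ≤ P.pts k := by
  induction k with
  | zero => interval_cases j; exact le_rfl
  | succ k ih =>
    rcases Nat.lt_or_ge j (k + 1) with h | h
    · have h1 : P.pts j ≤ P.pts k := ih (Nat.lt_succ_iff.mp h) (by omega)
      have h2 : P.pts k < P.pts (k + 1) := P.pts_mono k (by omega)
      linarith
    · have : j = k + 1 := by omega
      simp [this]

lemma pts_mem {a b : ℝ} (P : TaggedPartition a b) {j : ℕ} (hj : j ≤ P.n) :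
    P.pts j ∈ Set.Icc a b := by
  constructor
  · have h := pts_le P (Nat.zero_le j) hj
    rwa [P.pts_zero] at h
  · have h := pts_le P hj le_rfl
    rwa [P.pts_last] at h

lemma tag_mem_Icc {a b : ℝ} (P : TaggedPartition a b) {j : ℕ} (hj : j < P.n) :
    P.tag j ∈ Set.Icc a b := by
  obtain ⟨h1, h2⟩ := P.tag_mem j hj
  exact ⟨(pts_mem P (le_of_lt hj)).1.trans h1, h2.trans (pts_mem P hj).2⟩

/-- One-interval tagged partition of `[a,x]`. -/
def oneTP (a x t : ℝ) (hax : a < x) (ht : t ∈ Set.Icc a x) : TaggedPartition a x where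
  n := 1
  pts := fun j => if j = 0 then a else x
  tag := fun _ => t
  n_pos := one_pos
  pts_zero := by simp
  pts_last := by simp
  pts_mono := by intro j hj; interval_cases j; simpa using hax
  tag_mem := by intro j hj; interval_cases j; simpa using ht

/-- Append one interval `[x,y]` with tag `t` to a partition of `[a,x]`. -/
def appendTP {a x : ℝ} (P : TaggedPartition a x) (y t : ℝ) (hxy : x < y)
    (ht : t ∈ Set.Icc x y) : TaggedPartition a y where
  n := P.n + 1
  pts := fun j => if j ≤ P.n then P.pts j else y
  tag := fun j => if j < P.n then P.tag j else t
  n_pos := Nat.succ_pos _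
  pts_zero := by simp [P.pts_zero]
  pts_last := by simp
  pts_mono := by
    intro j hj
    rcases Nat.lt_or_ge j P.n with h | h
    · simp only [if_pos (le_of_lt h), if_pos (Nat.succ_le_of_lt h)]
      exact P.pts_mono j h
    · have hjn : j = P.n := by omega
      subst hjn
      simp only [le_refl, if_pos, if_neg (Nat.not_succ_le_self P.n)]
      rw [P.pts_last]; exact hxy
  tag_mem := by
    intro j hj
    rcases Nat.lt_or_ge j P.n with h | h
    · simp only [if_pos h, if_pos (le_of_lt h), if_pos (Nat.succ_le_of_lt h)]
      exact P.tag_mem j h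
    · have hjn : j = P.n := by omega
      subst hjn
      simp only [lt_irrefl, if_neg, le_refl, if_pos, if_neg (Nat.not_succ_le_self P.n)]
      rw [P.pts_last]; exact ht

lemma appendTP_fine {δ : ℝ → ℝ} {a x : ℝ} {P : TaggedPartition a x} (hP : IsFine δ P)
    {y t : ℝ} (hxy : x < y) (ht : t ∈ Set.Icc x y)
    (hcov : Set.Icc x y ⊆ Set.Icc (t - δ t) (t + δ t)) :
    IsFine δ (appendTP P y t hxy ht) := by
  intro j hj
  simp only [appendTP] at hj ⊢
  rcases Nat.lt_or_ge j P.n with h | h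
  · simp only [if_pos (le_of_lt h), if_pos (Nat.succ_le_of_lt h), if_pos h]
    exact hP j h
  · have hjn : j = P.n := by omega
    subst hjn
    simp only [le_refl, if_pos, if_neg (Nat.not_succ_le_self P.n), lt_irrefl, if_neg,
      not_false_iff]
    rw [P.pts_last]
    exact hcov

/-- Cousin's lemma: every positive gauge on `[a,b]` admits a fine partition. -/
lemma cousin {a b : ℝ} (hab : a < b) {δ : ℝ → ℝ} (hδ : ∀ t ∈ Set.Icc a b, 0 < δ t) :
    ∃ P : TaggedPartition a b, IsFine δ P := by
  set S : Set ℝ := {x | x ∈ Set.Ioc a b ∧ ∃ P : TaggedPartition a x, IsFine δ P} with hS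
  have hδa : 0 < δ a := hδ a ⟨le_rfl, le_of_lt hab⟩
  -- base point
  have hx0 : min b (a + δ a) ∈ S := by
    have hax0 : a < min b (a + δ a) := lt_min hab (by linarith)
    refine ⟨⟨hax0, min_le_left _ _⟩, oneTP a _ a hax0 ⟨le_rfl, le_of_lt hax0⟩, ?_⟩
    intro j hj
    simp only [oneTP] at hj ⊢
    interval_cases j
    intro z hz
    norm_num at hz ⊢
    obtain ⟨hz1, hz2, hz3⟩ := hz
    constructor <;> linarith
  have hne : S.Nonempty := ⟨_, hx0⟩
  have hbdd : BddAbove S := ⟨b, fun z hz => hz.1.2⟩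
  set c := sSup S with hc
  have hcb : c ≤ b := csSup_le hne fun z hz => hz.1.2
  have hac : a < c := lt_of_lt_of_le (lt_min hab (by linarith)) (le_csSup hbdd hx0)
  have hδc : 0 < δ c := hδ c ⟨le_of_lt hac, hcb⟩
  obtain ⟨x, hxS, hxc⟩ := exists_lt_of_lt_csSup hne (show c - δ c < c by linarith)
  have hxlec : x ≤ c := le_csSup hbdd hxS
  obtain ⟨⟨hax, hxb⟩, Px, hPx⟩ := hxS
  rcases eq_or_lt_of_le hxb with rfl | hxb'
  · exact ⟨Px, hPx⟩
  -- extend Px past c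
  rcases le_or_gt b (c + δ c) with hbc | hbc
  · -- reach b directly
    have htc : c ∈ Set.Icc x b := ⟨hxlec, hcb⟩
    have hcov : Set.Icc x b ⊆ Set.Icc (c - δ c) (c + δ c) := by
      intro z hz
      exact ⟨by linarith [hz.1], le_trans hz.2 hbc⟩
    exact ⟨appendTP Px b c hxb' htc, appendTP_fine hPx hxb' htc hcov⟩
  · exfalso
    have hxy : x < c + δ c := by linarith
    have htc : c ∈ Set.Icc x (c + δ c) := ⟨hxlec, by linarith⟩
    have hcov : Set.Icc x (c + δ c) ⊆ Set.Icc (c - δ c) (c + δ c) := by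
      intro z hz
      exact ⟨by linarith [hz.1], hz.2⟩
    have hyS : c + δ c ∈ S :=
      ⟨⟨lt_trans hax hxy, le_of_lt hbc⟩, appendTP Px (c + δ c) c hxy htc,
        appendTP_fine hPx hxy htc hcov⟩
    have := le_csSup hbdd hyS
    linarith

lemma sum_abs_le_var {a b : ℝ} (g : ℝ → ℝ) (hg : BoundedVariationOn g (Set.Icc a b))
    (hab : a ≤ b) (P : TaggedPartition a b) :
    ∑ j ∈ Finset.range P.n, |g (P.pts (j + 1)) - g (P.pts j)| ≤ var g a b := by
  set u : ℕ → ℝ := fun j => P.pts (min j P.n) with hu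
  have hmono : Monotone u := by
    intro i j hij
    exact pts_le P (min_le_min_right _ hij) (min_le_right _ _)
  have hmem : ∀ i, u i ∈ Set.Icc a b := fun i => pts_mem P (min_le_right _ _)
  have hsum := eVariationOn.sum_le (f := g) (n := P.n) hmono hmem
  have hrw : ∀ j ∈ Finset.range P.n,
      edist (g (u (j + 1))) (g (u j)) = ENNReal.ofReal |g (P.pts (j + 1)) - g (P.pts j)| := by
    intro j hj
    rw [Finset.mem_range] at hj
    have h1 : min (j + 1) P.n = j + 1 := min_eq_left (by omega)
    have h2 : min j P.n = j := min_eq_left (by omega)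
    rw [hu]
    simp only [h1, h2]
    rw [edist_dist, Real.dist_eq]
  rw [Finset.sum_congr rfl hrw] at hsum
  rw [← ENNReal.ofReal_sum_of_nonneg (fun j _ => abs_nonneg _)] at hsum
  exact (ENNReal.ofReal_le_iff_le_toReal hg).mp hsum

lemma RS_sub_le {a b : ℝ} (g h1 h2 : ℝ → ℝ) (hg : BoundedVariationOn g (Set.Icc a b))
    (hab : a ≤ b) (P : TaggedPartition a b) {c : ℝ}
    (hc : ∀ t ∈ Set.Icc a b, |h1 t - h2 t| ≤ c) :
    |RS h1 g P - RS h2 g P| ≤ c * var g a b := by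
  have hc0 : 0 ≤ c := le_trans (abs_nonneg _) (hc a ⟨le_rfl, hab⟩)
  have heq : RS h1 g P - RS h2 g P =
      ∑ j ∈ Finset.range P.n, (h1 (P.tag j) - h2 (P.tag j)) * (g (P.pts (j + 1)) - g (P.pts j)) := by
    rw [RS, RS, ← Finset.sum_sub_distrib]
    congr 1; ext j; ring
  rw [heq]
  calc |∑ j ∈ Finset.range P.n, (h1 (P.tag j) - h2 (P.tag j)) * (g (P.pts (j+1)) - g (P.pts j))|
      ≤ ∑ j ∈ Finset.range P.n, |(h1 (P.tag j) - h2 (P.tag j)) * (g (P.pts (j+1)) - g (P.pts j))| :=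
        Finset.abs_sum_le_sum_abs _ _
    _ ≤ ∑ j ∈ Finset.range P.n, c * |g (P.pts (j+1)) - g (P.pts j)| := by
        apply Finset.sum_le_sum
        intro j hj
        rw [Finset.mem_range] at hj
        rw [abs_mul]
        exact mul_le_mul_of_nonneg_right (hc _ (tag_mem_Icc P hj)) (abs_nonneg _)
    _ = c * ∑ j ∈ Finset.range P.n, |g (P.pts (j+1)) - g (P.pts j)| := by
        rw [Finset.mul_sum]
    _ ≤ c * var g a b := mul_le_mul_of_nonneg_left (sum_abs_le_var g hg hab P) hc0

end Stmt13Aux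

/-- uniform convergence theorem for the Kurzweil–Stieltjes
integral. -/
theorem stmt13 (a b : ℝ) (hab : a < b) (g : ℝ → ℝ)
    (hg : BoundedVariationOn g (Set.Icc a b))
    (f : ℕ → ℝ → ℝ) (flim : ℝ → ℝ) (I : ℕ → ℝ)
    (hfn : ∀ n, HasKS (f n) g a b (I n))
    (hunif : TendstoUniformlyOn f flim Filter.atTop (Set.Icc a b)) :
    ∃ J : ℝ, HasKS flim g a b J ∧ Filter.Tendsto I Filter.atTop (nhds J) := by
  open Stmt13Aux in
  have hV : 0 ≤ var g a b := ENNReal.toReal_nonneg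
  set V := var g a b with hVdef
  -- Step 1: (I n) is Cauchy.
  have hcauchy : CauchySeq I := by
    rw [Metric.cauchySeq_iff]
    intro ε hε
    set ε' := ε / (2 * V + 3) with hε'def
    have hε' : 0 < ε' := div_pos hε (by linarith)
    obtain ⟨N, hN⟩ := (Metric.tendstoUniformlyOn_iff.mp hunif ε' hε').exists_forall_of_atTop
    refine ⟨N, fun m hm n hn => ?_⟩
    obtain ⟨δ1, hδ1, hP1⟩ := hfn m ε' hε'
    obtain ⟨δ2, hδ2, hP2⟩ := hfn n ε' hε'
    set δ : ℝ → ℝ := fun t => min (δ1 t) (δ2 t) with hδdef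
    have hδpos : ∀ t ∈ Set.Icc a b, 0 < δ t := fun t ht =>
      lt_min (hδ1 t ht).1 (hδ2 t ht).1
    obtain ⟨P, hP⟩ := cousin hab hδpos
    have hf1 : IsFine δ1 P := fun j hj =>
      (hP j hj).trans (Set.Icc_subset_Icc
        (sub_le_sub_left (show δ (P.tag j) ≤ δ1 (P.tag j) from min_le_left _ _) _)
        (add_le_add_right (show δ (P.tag j) ≤ δ1 (P.tag j) from min_le_left _ _) _))
    have hf2 : IsFine δ2 P := fun j hj =>
      (hP j hj).trans (Set.Icc_subset_Icc
        (sub_le_sub_left (show δ (P.tag j) ≤ δ2 (P.tag j) from min_le_right _ _) _)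
        (add_le_add_right (show δ (P.tag j) ≤ δ2 (P.tag j) from min_le_right _ _) _))
    have e1 : |RS (f m) g P - I m| < ε' := hP1 P hf1
    have e2 : |RS (f n) g P - I n| < ε' := hP2 P hf2
    have e3 : |RS (f m) g P - RS (f n) g P| ≤ (2 * ε') * V := by
      apply RS_sub_le g _ _ hg (le_of_lt hab) P
      intro t ht
      have h1 := hN m hm t ht
      have h2 := hN n hn t ht
      rw [Real.dist_eq] at h1 h2
      calc |f m t - f n t| = |(flim t - f n t) - (flim t - f m t)| := by ring_nf
        _ ≤ |flim t - f n t| + |flim t - f m t| := abs_sub _ _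
        _ ≤ 2 * ε' := by linarith
    rw [Real.dist_eq]
    have : |I m - I n| ≤ |RS (f m) g P - I m| + |RS (f m) g P - RS (f n) g P|
        + |RS (f n) g P - I n| := by
      have := abs_sub (RS (f m) g P - I n) (RS (f m) g P - I m)
      have h4 : |I m - I n| = |(RS (f m) g P - I n) - (RS (f m) g P - I m)| := by ring_nf
      rw [h4]
      calc |(RS (f m) g P - I n) - (RS (f m) g P - I m)|
          ≤ |RS (f m) g P - I n| + |RS (f m) g P - I m| := abs_sub _ _
        _ ≤ (|RS (f m) g P - RS (f n) g P| + |RS (f n) g P - I n|) + |RS (f m) g P - I m| := by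
            have : |RS (f m) g P - I n| =
                |(RS (f m) g P - RS (f n) g P) + (RS (f n) g P - I n)| := by ring_nf
            rw [this]
            linarith [abs_add_le (RS (f m) g P - RS (f n) g P) (RS (f n) g P - I n)]
        _ = _ := by ring
    have hεeq : ε' * (2 * V + 3) = ε := by
      rw [hε'def]; field_simp
    calc |I m - I n| ≤ ε' + (2 * ε') * V + ε' := by linarith
      _ < ε' * (2 * V + 3) := by nlinarith
      _ = ε := hεeq
  obtain ⟨J, hJ⟩ := cauchySeq_tendsto_of_complete hcauchy
  refine ⟨J, ?_, hJ⟩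
  -- Step 2: HasKS flim g a b J.
  intro ε hε
  set ε' := ε / (V + 3) with hε'def
  have hε' : 0 < ε' := div_pos hε (by linarith)
  have h1 : ∀ᶠ n in Filter.atTop, ∀ x ∈ Set.Icc a b, dist (flim x) (f n x) < ε' :=
    Metric.tendstoUniformlyOn_iff.mp hunif ε' hε'
  have h2 : ∀ᶠ n in Filter.atTop, dist (I n) J < ε' :=
    hJ (Metric.ball_mem_nhds J hε')
  obtain ⟨n, hn1, hn2⟩ := (h1.and h2).exists
  obtain ⟨δ, hδ, hPδ⟩ := hfn n ε' hε'
  refine ⟨δ, hδ, fun P hP => ?_⟩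
  have e1 : |RS flim g P - RS (f n) g P| ≤ ε' * V := by
    apply RS_sub_le g _ _ hg (le_of_lt hab) P
    intro t ht
    have := hn1 t ht
    rw [Real.dist_eq] at this
    exact le_of_lt this
  have e2 : |RS (f n) g P - I n| < ε' := hPδ P hP
  have e3 : |I n - J| < ε' := by rw [← Real.dist_eq]; exact hn2
  have : |RS flim g P - J| ≤ |RS flim g P - RS (f n) g P| + |RS (f n) g P - I n|
      + |I n - J| := by
    calc |RS flim g P - J|
        = |(RS flim g P - RS (f n) g P) + ((RS (f n) g P - I n) + (I n - J))| := by ring_nf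
      _ ≤ |RS flim g P - RS (f n) g P| + |(RS (f n) g P - I n) + (I n - J)| := abs_add_le _ _
      _ ≤ _ := by linarith [abs_add_le (RS (f n) g P - I n) (I n - J)]
  have hεeq : ε' * (V + 3) = ε := by rw [hε'def]; field_simp
  calc |RS flim g P - J| ≤ ε' * V + ε' + ε' := by linarith
    _ < ε' * (V + 3) := by nlinarith
    _ = ε := hεeq
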